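/- Let $(\mu,\lambda)\in\mathbb{Z}^2_{\mathrm{prim}}$. Then for every $B > 0$, $$\#\{(t_0,\ldots,t_4)\in\mathbb{Z}^5_{\mathrm{prim}} : (t_0,t_1)\neq(0,0),\ \lambda t_0 = \mu t_1,\ \mu^2 t_2 + \lambda^2 t_3 + \mu\lambda t_4 = 0,\ t_0^2t_2+t_1^2t_3+t_0t_1t_4=0,\ t_0^2+\cdots+t_4^2 \le B^2\}$$ $$= \#\{(\tau_0,\tau_2,\tau_3)\in\mathbb{Z}^3_{\mathrm{prim}} : \tau_0\neq 0,\ (\mu\tau_0)^2+(\lambda\tau_0)^2+(\lambda\tau_2)^2+(\mu\tau_3)^2+(\lambda\tau_3+\mu\tau_2)^2 \le B^2\}.$$ -/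

import Mathlib

/-- parametrization of the primitive points of bounded height on the fiber
`V ∩ V_y`, `y = (μ:λ)`, of the non-normal cubic threefold `t₀²t₂ + t₁²t₃ + t₀t₁t₄ = 0`. -/
theorem stmt_13 (μ lam : ℤ) (hp : (μ, lam) ≠ (0, 0)) (hprim : Int.gcd μ lam = 1)
    (B : ℝ) (hB : 0 < B) :
    Set.ncard {t : ℤ × ℤ × ℤ × ℤ × ℤ |
        (t ≠ 0 ∧
          Int.gcd t.1 (Int.gcd t.2.1 (Int.gcd t.2.2.1 (Int.gcd t.2.2.2.1 t.2.2.2.2))) = 1) ∧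
        (t.1, t.2.1) ≠ (0, 0) ∧
        lam * t.1 = μ * t.2.1 ∧
        μ ^ 2 * t.2.2.1 + lam ^ 2 * t.2.2.2.1 + μ * lam * t.2.2.2.2 = 0 ∧
        t.1 ^ 2 * t.2.2.1 + t.2.1 ^ 2 * t.2.2.2.1 + t.1 * t.2.1 * t.2.2.2.2 = 0 ∧
        (t.1 : ℝ) ^ 2 + (t.2.1 : ℝ) ^ 2 + (t.2.2.1 : ℝ) ^ 2 + (t.2.2.2.1 : ℝ) ^ 2 +
          (t.2.2.2.2 : ℝ) ^ 2 ≤ B ^ 2} =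
    Set.ncard {τ : ℤ × ℤ × ℤ |
        (τ ≠ 0 ∧ Int.gcd τ.1 (Int.gcd τ.2.1 τ.2.2) = 1) ∧ τ.1 ≠ 0 ∧
        ((μ : ℝ) * (τ.1 : ℝ)) ^ 2 + ((lam : ℝ) * (τ.1 : ℝ)) ^ 2 +
          ((lam : ℝ) * (τ.2.1 : ℝ)) ^ 2 + ((μ : ℝ) * (τ.2.2 : ℝ)) ^ 2 +
          ((lam : ℝ) * (τ.2.2 : ℝ) + (μ : ℝ) * (τ.2.1 : ℝ)) ^ 2 ≤ B ^ 2} := by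
  obtain ⟨a, b, hab⟩ : ∃ a b : ℤ, a * μ + b * lam = 1 := by
    obtain ⟨a, b, h⟩ := Int.isCoprime_iff_gcd_eq_one.mpr hprim
    exact ⟨a, b, h⟩
  have hml : μ ≠ 0 ∨ lam ≠ 0 := by
    by_contra h
    push_neg at h
    exact hp (Prod.ext h.1 h.2)
  set f : ℤ × ℤ × ℤ → ℤ × ℤ × ℤ × ℤ × ℤ := fun τ =>
    (μ * τ.1, lam * τ.1, lam * τ.2.1, μ * τ.2.2, -(lam * τ.2.2 + μ * τ.2.1)) with hf
  have hinj : Function.Injective f := by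
    rintro ⟨x0, x2, x3⟩ ⟨y0, y2, y3⟩ h
    simp only [hf, Prod.mk.injEq] at h
    obtain ⟨h1, h2, h3, h4, h5⟩ := h
    have h5' : lam * x3 + μ * x2 = lam * y3 + μ * y2 := by linarith [neg_injective h5]
    rcases hml with hm | hl
    · have e0 : x0 = y0 := mul_left_cancel₀ hm h1
      have e3 : x3 = y3 := mul_left_cancel₀ hm h4
      have e2 : x2 = y2 := by
        apply mul_left_cancel₀ hm
        have : lam * x3 = lam * y3 := by rw [e3]
        linarith
      simp [e0, e2, e3]
    · have e0 : x0 = y0 := mul_left_cancel₀ hl h2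
      have e2 : x2 = y2 := mul_left_cancel₀ hl h3
      have e3 : x3 = y3 := by
        apply mul_left_cancel₀ hl
        have : μ * x2 = μ * y2 := by rw [e2]
        linarith
      simp [e0, e2, e3]
  have key : {t : ℤ × ℤ × ℤ × ℤ × ℤ |
        (t ≠ 0 ∧
          Int.gcd t.1 (Int.gcd t.2.1 (Int.gcd t.2.2.1 (Int.gcd t.2.2.2.1 t.2.2.2.2))) = 1) ∧
        (t.1, t.2.1) ≠ (0, 0) ∧
        lam * t.1 = μ * t.2.1 ∧
        μ ^ 2 * t.2.2.1 + lam ^ 2 * t.2.2.2.1 + μ * lam * t.2.2.2.2 = 0 ∧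
        t.1 ^ 2 * t.2.2.1 + t.2.1 ^ 2 * t.2.2.2.1 + t.1 * t.2.1 * t.2.2.2.2 = 0 ∧
        (t.1 : ℝ) ^ 2 + (t.2.1 : ℝ) ^ 2 + (t.2.2.1 : ℝ) ^ 2 + (t.2.2.2.1 : ℝ) ^ 2 +
          (t.2.2.2.2 : ℝ) ^ 2 ≤ B ^ 2} =
      f '' {τ : ℤ × ℤ × ℤ |
        (τ ≠ 0 ∧ Int.gcd τ.1 (Int.gcd τ.2.1 τ.2.2) = 1) ∧ τ.1 ≠ 0 ∧
        ((μ : ℝ) * (τ.1 : ℝ)) ^ 2 + ((lam : ℝ) * (τ.1 : ℝ)) ^ 2 +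
          ((lam : ℝ) * (τ.2.1 : ℝ)) ^ 2 + ((μ : ℝ) * (τ.2.2 : ℝ)) ^ 2 +
          ((lam : ℝ) * (τ.2.2 : ℝ) + (μ : ℝ) * (τ.2.1 : ℝ)) ^ 2 ≤ B ^ 2} := by
    ext ⟨t0, t1, t2, t3, t4⟩
    simp only [Set.mem_setOf_eq, Set.mem_image]
    constructor
    · rintro ⟨⟨htne, hgcd⟩, ht01, hlin, heq, hcub, hnorm⟩
      set τ0 : ℤ := a * t0 + b * t1 with hτ0def
      set τ2 : ℤ := -(a^2) * lam * t3 - a^2 * μ * t4 + 2*a*b*μ*t2 + b^2*lam*t2 with hτ2def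
      set τ3 : ℤ := a^2*μ*t3 + 2*a*b*lam*t3 - b^2*μ*t2 - b^2*lam*t4 with hτ3def
      have h0 : μ * τ0 = t0 := by linear_combination t0 * hab - b * hlin
      have h1 : lam * τ0 = t1 := by linear_combination t1 * hab + a * hlin
      have h2 : lam * τ2 = t2 := by
        linear_combination t2 * (a*μ + b*lam + 1) * hab - a^2 * heq
      have h3 : μ * τ3 = t3 := by
        linear_combination t3 * (a*μ + b*lam + 1) * hab - b^2 * heq
      have h4 : -(lam * τ3 + μ * τ2) = t4 := by
        linear_combination t4 * (a*μ + b*lam + 1) * hab - 2*a*b * heq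
      have hτ0ne : τ0 ≠ 0 := by
        intro h
        apply ht01
        have : t0 = 0 := by rw [← h0, h, mul_zero]
        have : t1 = 0 := by rw [← h1, h, mul_zero]
        simp_all
      refine ⟨(τ0, τ2, τ3), ⟨⟨?_, ?_⟩, hτ0ne, ?_⟩, ?_⟩
      · simp [Prod.ext_iff, hτ0ne]
      · -- gcd τ = 1
        have hd : (Int.gcd τ0 (Int.gcd τ2 τ3) : ℤ) ∣ 1 := by
          have d0 : (Int.gcd τ0 (Int.gcd τ2 τ3) : ℤ) ∣ τ0 := (Int.gcd_dvd_left _ _)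
          have d2 : (Int.gcd τ0 (Int.gcd τ2 τ3) : ℤ) ∣ τ2 :=
            dvd_trans (Int.gcd_dvd_right _ _) (Int.gcd_dvd_left _ _)
          have d3 : (Int.gcd τ0 (Int.gcd τ2 τ3) : ℤ) ∣ τ3 :=
            dvd_trans (Int.gcd_dvd_right _ _) (Int.gcd_dvd_right _ _)
          have e0 : (Int.gcd τ0 (Int.gcd τ2 τ3) : ℤ) ∣ t0 := h0 ▸ d0.mul_left μ
          have e1 : (Int.gcd τ0 (Int.gcd τ2 τ3) : ℤ) ∣ t1 := h1 ▸ d0.mul_left lam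
          have e2 : (Int.gcd τ0 (Int.gcd τ2 τ3) : ℤ) ∣ t2 := h2 ▸ d2.mul_left lam
          have e3 : (Int.gcd τ0 (Int.gcd τ2 τ3) : ℤ) ∣ t3 := h3 ▸ d3.mul_left μ
          have e4 : (Int.gcd τ0 (Int.gcd τ2 τ3) : ℤ) ∣ t4 := by
            rw [← h4]
            exact dvd_neg.mpr ((d3.mul_left lam).add (d2.mul_left μ))
          calc (Int.gcd τ0 (Int.gcd τ2 τ3) : ℤ)
              ∣ (Int.gcd t0 (Int.gcd t1 (Int.gcd t2 (Int.gcd t3 t4))) : ℤ) :=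
                Int.dvd_coe_gcd e0 (Int.dvd_coe_gcd e1 (Int.dvd_coe_gcd e2 (Int.dvd_coe_gcd e3 e4)))
            _ = 1 := by exact_mod_cast congrArg (Nat.cast : ℕ → ℤ) hgcd
        have := Int.eq_one_of_dvd_one (by positivity) hd
        exact_mod_cast this
      · -- norm for τ
        have c0 : (μ : ℝ) * (τ0 : ℝ) = (t0 : ℝ) := by exact_mod_cast congrArg (Int.cast : ℤ → ℝ) h0
        have c1 : (lam : ℝ) * (τ0 : ℝ) = (t1 : ℝ) := by exact_mod_cast congrArg (Int.cast : ℤ → ℝ) h1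
        have c2 : (lam : ℝ) * (τ2 : ℝ) = (t2 : ℝ) := by exact_mod_cast congrArg (Int.cast : ℤ → ℝ) h2
        have c3 : (μ : ℝ) * (τ3 : ℝ) = (t3 : ℝ) := by exact_mod_cast congrArg (Int.cast : ℤ → ℝ) h3
        have c4 : (lam : ℝ) * (τ3 : ℝ) + (μ : ℝ) * (τ2 : ℝ) = -(t4 : ℝ) := by
          have := congrArg (Int.cast : ℤ → ℝ) h4
          push_cast at this
          linarith
        rw [c0, c1, c2, c3, c4]
        calc (t0:ℝ)^2 + (t1:ℝ)^2 + (t2:ℝ)^2 + (t3:ℝ)^2 + (-(t4:ℝ))^2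
            = (t0:ℝ)^2 + (t1:ℝ)^2 + (t2:ℝ)^2 + (t3:ℝ)^2 + (t4:ℝ)^2 := by ring
          _ ≤ B ^ 2 := hnorm
      · -- f τ = t
        simp only [hf, Prod.mk.injEq]
        exact ⟨h0, h1, h2, h3, h4⟩
    · rintro ⟨⟨τ0, τ2, τ3⟩, ⟨⟨hτne, hτgcd⟩, hτ0ne, hτnorm⟩, heqf⟩
      simp only [hf, Prod.mk.injEq] at heqf
      obtain ⟨h0, h1, h2, h3, h4⟩ := heqf
      subst h0 h1 h2 h3 h4
      have h01 : (μ * τ0, lam * τ0) ≠ ((0 : ℤ), (0 : ℤ)) := by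
        intro h
        rw [Prod.mk.injEq] at h
        rcases hml with hm | hl
        · exact hτ0ne (by rcases mul_eq_zero.mp h.1 with h' | h' <;> simp_all)
        · exact hτ0ne (by rcases mul_eq_zero.mp h.2 with h' | h' <;> simp_all)
      refine ⟨⟨?_, ?_⟩, h01, by ring, by ring, by ring, ?_⟩
      · intro h
        rw [Prod.ext_iff] at h
        exact h01 (by simp_all [Prod.ext_iff])
      · -- gcd t = 1
        set d : ℤ := (Int.gcd (μ * τ0) (Int.gcd (lam * τ0)
          (Int.gcd (lam * τ2) (Int.gcd (μ * τ3) (-(lam * τ3 + μ * τ2))))) : ℤ) with hd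
        have e0 : d ∣ μ * τ0 := (Int.gcd_dvd_left _ _)
        have e1 : d ∣ lam * τ0 := dvd_trans (Int.gcd_dvd_right _ _) (Int.gcd_dvd_left _ _)
        have e2 : d ∣ lam * τ2 :=
          dvd_trans (Int.gcd_dvd_right _ _) (dvd_trans (Int.gcd_dvd_right _ _) (Int.gcd_dvd_left _ _))
        have e3 : d ∣ μ * τ3 :=
          dvd_trans (Int.gcd_dvd_right _ _) (dvd_trans (Int.gcd_dvd_right _ _)
            (dvd_trans (Int.gcd_dvd_right _ _) (Int.gcd_dvd_left _ _)))
        have e4 : d ∣ -(lam * τ3 + μ * τ2) :=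
          dvd_trans (Int.gcd_dvd_right _ _) (dvd_trans (Int.gcd_dvd_right _ _)
            (dvd_trans (Int.gcd_dvd_right _ _) (Int.gcd_dvd_right _ _)))
        have dτ0 : d ∣ τ0 := by
          have : τ0 = a * (μ * τ0) + b * (lam * τ0) := by linear_combination (-τ0) * hab
          rw [this]
          exact dvd_add (e0.mul_left a) (e1.mul_left b)
        have dτ2 : d ∣ τ2 := by
          have : τ2 = (-(a^2)*lam) * (μ * τ3) + (-(a^2)*μ) * (-(lam * τ3 + μ * τ2))
              + (2*a*b*μ + b^2*lam) * (lam * τ2) := by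
            linear_combination (-τ2) * (a*μ + b*lam + 1) * hab
          rw [this]
          exact dvd_add (dvd_add (e3.mul_left _) (e4.mul_left _)) (e2.mul_left _)
        have dτ3 : d ∣ τ3 := by
          have : τ3 = (a^2*μ + 2*a*b*lam) * (μ * τ3) + (-(b^2)*μ) * (lam * τ2)
              + (-(b^2)*lam) * (-(lam * τ3 + μ * τ2)) := by
            linear_combination (-τ3) * (a*μ + b*lam + 1) * hab
          rw [this]
          exact dvd_add (dvd_add (e3.mul_left _) (e2.mul_left _)) (e4.mul_left _)
        have hdvd1 : d ∣ 1 := by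
          calc d ∣ (Int.gcd τ0 (Int.gcd τ2 τ3) : ℤ) :=
                Int.dvd_coe_gcd dτ0 (Int.dvd_coe_gcd dτ2 dτ3)
            _ = 1 := by exact_mod_cast congrArg (Nat.cast : ℕ → ℤ) hτgcd
        have := Int.eq_one_of_dvd_one (by rw [hd]; positivity) hdvd1
        rw [hd] at this
        exact_mod_cast this
      · -- norm
        have : ((μ * τ0 : ℤ) : ℝ) ^ 2 + ((lam * τ0 : ℤ) : ℝ) ^ 2 + ((lam * τ2 : ℤ) : ℝ) ^ 2
            + ((μ * τ3 : ℤ) : ℝ) ^ 2 + ((-(lam * τ3 + μ * τ2) : ℤ) : ℝ) ^ 2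
            = ((μ : ℝ) * (τ0 : ℝ)) ^ 2 + ((lam : ℝ) * (τ0 : ℝ)) ^ 2 +
              ((lam : ℝ) * (τ2 : ℝ)) ^ 2 + ((μ : ℝ) * (τ3 : ℝ)) ^ 2 +
              ((lam : ℝ) * (τ3 : ℝ) + (μ : ℝ) * (τ2 : ℝ)) ^ 2 := by
          push_cast
          ring
        rw [this]
        exact hτnorm
  rw [key, Set.ncard_image_of_injective _ hinj]
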